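/- If each f_n commutes with f, each f_n is feeble open and surjective, and Σ_{n=1}^∞ D(f_n, f) < ∞, then (X, f) is weakly mixing if and only if (X, F) is weakly mixing, where (X, F) is weakly mixing means: for all nonempty open sets U₁, U₂, V₁, V₂ there exists n ∈ ℕ with ω_n(U_i) ∩ V_i ≠ ∅ for i = 1, 2. -/

import Mathlib

open Filter Metric Set

noncomputable def supD {X : Type*} [MetricSpace X] (g h : X → X) : ℝ :=
  ⨆ x, dist (g x) (h x)

def omega {X : Type*} (fn : ℕ → X → X) : ℕ → X → X
  | 0 => id
  | k + 1 => fn (k + 1) ∘ omega fn k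

def omegaSeg {X : Type*} (fn : ℕ → X → X) (n : ℕ) : ℕ → X → X
  | 0 => id
  | k + 1 => fn (n + k + 1) ∘ omegaSeg fn n k

section Aux

variable {X : Type*} [MetricSpace X] [CompactSpace X] [Nonempty X]

lemma supD_nonneg (g h : X → X) : 0 ≤ supD g h :=
  Real.iSup_nonneg fun _ => dist_nonneg

lemma dist_le_supD {g h : X → X} (hg : Continuous g) (hh : Continuous h) (x : X) :
    dist (g x) (h x) ≤ supD g h :=
  le_ciSup ((isCompact_range (hg.dist hh)).bddAbove) x

variable {fn : ℕ → X → X} {f : X → X}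

lemma omega_continuous (hfn : ∀ n, Continuous (fn n)) : ∀ n, Continuous (omega fn n)
  | 0 => continuous_id
  | k + 1 => (hfn (k + 1)).comp (omega_continuous hfn k)

lemma omega_surjective (hs : ∀ n, Function.Surjective (fn n)) :
    ∀ n, Function.Surjective (omega fn n)
  | 0 => Function.surjective_id
  | k + 1 => (hs (k + 1)).comp (omega_surjective hs k)

lemma omega_add (fn : ℕ → X → X) (m : ℕ) :
    ∀ k, omega fn (m + k) = omegaSeg fn m k ∘ omega fn m
  | 0 => rfl
  | k + 1 => by
    show fn (m + k + 1) ∘ omega fn (m + k) = (fn (m + k + 1) ∘ omegaSeg fn m k) ∘ omega fn m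
    rw [omega_add fn m k]
    rfl

lemma omegaSeg_comm (hcomm : ∀ n, fn n ∘ f = f ∘ fn n) (m : ℕ) :
    ∀ k, f ∘ omegaSeg fn m k = omegaSeg fn m k ∘ f
  | 0 => rfl
  | k + 1 => by
    show f ∘ (fn (m + k + 1) ∘ omegaSeg fn m k) = (fn (m + k + 1) ∘ omegaSeg fn m k) ∘ f
    calc f ∘ (fn (m + k + 1) ∘ omegaSeg fn m k)
        = (f ∘ fn (m + k + 1)) ∘ omegaSeg fn m k := rfl
      _ = (fn (m + k + 1) ∘ f) ∘ omegaSeg fn m k := by rw [hcomm]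
      _ = fn (m + k + 1) ∘ (f ∘ omegaSeg fn m k) := rfl
      _ = (fn (m + k + 1) ∘ omegaSeg fn m k) ∘ f := by rw [omegaSeg_comm hcomm m k]; rfl

lemma dist_omegaSeg_iterate (hf : Continuous f) (hfn : ∀ n, Continuous (fn n))
    (hcomm : ∀ n, fn n ∘ f = f ∘ fn n) (m : ℕ) :
    ∀ (k : ℕ) (x : X),
      dist (omegaSeg fn m k x) (f^[k] x) ≤ ∑ j ∈ Finset.range k, supD (fn (m + j + 1)) f
  | 0, x => by simp [omegaSeg]
  | k + 1, x => by
    have h1 : omegaSeg fn m (k + 1) x = fn (m + k + 1) (omegaSeg fn m k x) := rfl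
    have h2 : f^[k + 1] x = f^[k] (f x) := Function.iterate_succ_apply f k x
    have hcS : f (omegaSeg fn m k x) = omegaSeg fn m k (f x) :=
      congrFun (omegaSeg_comm hcomm m k) x
    have hc : Continuous (omegaSeg fn m k) := by
      clear h1 h2 hcS
      induction k with
      | zero => exact continuous_id
      | succ k ih => exact (hfn (m + k + 1)).comp ih
    calc dist (omegaSeg fn m (k + 1) x) (f^[k + 1] x)
        ≤ dist (fn (m + k + 1) (omegaSeg fn m k x)) (f (omegaSeg fn m k x))
          + dist (f (omegaSeg fn m k x)) (f^[k] (f x)) := by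
          rw [h1, h2]; exact dist_triangle _ _ _
      _ ≤ supD (fn (m + k + 1)) f + ∑ j ∈ Finset.range k, supD (fn (m + j + 1)) f := by
          gcongr
          · exact dist_le_supD (hfn (m + k + 1)) hf _
          · rw [hcS]; exact dist_omegaSeg_iterate hf hfn hcomm m k (f x)
      _ = ∑ j ∈ Finset.range (k + 1), supD (fn (m + j + 1)) f := by
          rw [Finset.sum_range_succ]; ring

lemma omega_feeble (hfo : ∀ n, ∀ U : Set X, IsOpen U → U.Nonempty →
    (interior (fn n '' U)).Nonempty) :
    ∀ (m : ℕ) (U : Set X), IsOpen U → U.Nonempty → (interior (omega fn m '' U)).Nonempty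
  | 0, U, hUo, hUne => by simpa [omega, hUo.interior_eq] using hUne
  | m + 1, U, hUo, hUne => by
    obtain ⟨w, hw⟩ := omega_feeble hfo m U hUo hUne
    have h1 : (interior (fn (m + 1) '' interior (omega fn m '' U))).Nonempty :=
      hfo (m + 1) _ isOpen_interior ⟨w, hw⟩
    have h2 : fn (m + 1) '' interior (omega fn m '' U) ⊆ omega fn (m + 1) '' U := by
      intro y ⟨z, hz, hzy⟩
      obtain ⟨u, hu, huz⟩ := interior_subset hz
      exact ⟨u, hu, by simp [omega, Function.comp, huz, hzy]⟩
    exact h1.mono (interior_mono h2)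

end Aux

theorem stmt11 {X : Type*} [MetricSpace X] [CompactSpace X] [Nonempty X]
    (f : X → X) (fn : ℕ → X → X)
    (hf : Continuous f) (hfsurj : Function.Surjective f)
    (hfn : ∀ n, Continuous (fn n))
    (hsurj : ∀ n, Function.Surjective (fn n))
    (hfo : ∀ n, ∀ U : Set X, IsOpen U → U.Nonempty → (interior (fn n '' U)).Nonempty)
    (hcomm : ∀ n, fn n ∘ f = f ∘ fn n)
    (hsum : Summable fun n => supD (fn (n + 1)) f) :
    (∀ U₁ U₂ V₁ V₂ : Set X, IsOpen U₁ → IsOpen U₂ → IsOpen V₁ → IsOpen V₂ →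
        U₁.Nonempty → U₂.Nonempty → V₁.Nonempty → V₂.Nonempty →
        ∃ n : ℕ, 1 ≤ n ∧ (f^[n] '' U₁ ∩ V₁).Nonempty ∧ (f^[n] '' U₂ ∩ V₂).Nonempty) ↔
    (∀ U₁ U₂ V₁ V₂ : Set X, IsOpen U₁ → IsOpen U₂ → IsOpen V₁ → IsOpen V₂ →
        U₁.Nonempty → U₂.Nonempty → V₁.Nonempty → V₂.Nonempty →
        ∃ n : ℕ, 1 ≤ n ∧ (omega fn n '' U₁ ∩ V₁).Nonempty ∧
          (omega fn n '' U₂ ∩ V₂).Nonempty) := by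
  classical
  set a : ℕ → ℝ := fun n => supD (fn (n + 1)) f with ha_def
  have ha : ∀ n, 0 ≤ a n := fun n => supD_nonneg _ _
  -- the key estimate: segments are uniformly close to iterates of f, up to the tail sum
  have key : ∀ m k (x : X), dist (omegaSeg fn m k x) (f^[k] x) ≤ ∑' j, a (j + m) := by
    intro m k x
    have h1 := dist_omegaSeg_iterate hf hfn hcomm m k x
    have h2 : ∑ j ∈ Finset.range k, supD (fn (m + j + 1)) f ≤ ∑' j, a (j + m) := by
      have hs : Summable fun j => a (j + m) := (summable_nat_add_iff m).2 hsum
      have : ∀ j ∈ Finset.range k, supD (fn (m + j + 1)) f = a (j + m) := by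
        intro j _; simp only [ha_def]; ring_nf
      rw [Finset.sum_congr rfl this]
      exact Summable.sum_le_tsum _ (fun j _ => ha _) hs
    linarith
  have htail : ∀ ε : ℝ, 0 < ε → ∃ m, ∑' j, a (j + m) < ε := by
    intro ε hε
    have := tendsto_sum_nat_add a
    rcases (Metric.tendsto_atTop.1 this ε hε) with ⟨m, hm⟩
    refine ⟨m, ?_⟩
    have := hm m le_rfl
    rw [Real.dist_eq, sub_zero] at this
    calc ∑' j, a (j + m) ≤ |∑' j, a (j + m)| := le_abs_self _
      _ < ε := this
  constructor
  · -- f weakly mixing → F weakly mixing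
    intro h U₁ U₂ V₁ V₂ hU₁o hU₂o hV₁o hV₂o hU₁ hU₂ hV₁ hV₂
    obtain ⟨y₁, hy₁⟩ := hV₁
    obtain ⟨y₂, hy₂⟩ := hV₂
    obtain ⟨r₁, hr₁, hb₁⟩ := Metric.isOpen_iff.1 hV₁o y₁ hy₁
    obtain ⟨r₂, hr₂, hb₂⟩ := Metric.isOpen_iff.1 hV₂o y₂ hy₂
    set ε : ℝ := min r₁ r₂ / 2 with hε_def
    have hε : 0 < ε := by positivity
    obtain ⟨m, hm⟩ := htail ε hε
    obtain ⟨w₁, hw₁⟩ := omega_feeble hfo m U₁ hU₁o hU₁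
    obtain ⟨w₂, hw₂⟩ := omega_feeble hfo m U₂ hU₂o hU₂
    obtain ⟨k, hk1, ⟨z₁, ⟨p₁, hp₁, hz₁⟩, hz₁b⟩, ⟨z₂, ⟨p₂, hp₂, hz₂⟩, hz₂b⟩⟩ :=
      h (interior (omega fn m '' U₁)) (interior (omega fn m '' U₂)) (ball y₁ ε) (ball y₂ ε)
        isOpen_interior isOpen_interior isOpen_ball isOpen_ball
        ⟨w₁, hw₁⟩ ⟨w₂, hw₂⟩ (nonempty_ball.2 hε) (nonempty_ball.2 hε)
    obtain ⟨u₁, hu₁, hu₁p⟩ := interior_subset hp₁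
    obtain ⟨u₂, hu₂, hu₂p⟩ := interior_subset hp₂
    refine ⟨m + k, le_trans hk1 (Nat.le_add_left k m), ?_, ?_⟩
    · refine ⟨omega fn (m + k) u₁, ⟨u₁, hu₁, rfl⟩, hb₁ ?_⟩
      have heq : omega fn (m + k) u₁ = omegaSeg fn m k p₁ := by
        rw [omega_add fn m k]; simp [Function.comp, hu₁p]
      rw [mem_ball, heq]
      calc dist (omegaSeg fn m k p₁) y₁
          ≤ dist (omegaSeg fn m k p₁) (f^[k] p₁) + dist (f^[k] p₁) y₁ := dist_triangle _ _ _
        _ < ε + ε := by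
            have := key m k p₁
            have hzb : dist (f^[k] p₁) y₁ < ε := by rw [← hz₁] at hz₁b; exact mem_ball.1 hz₁b
            linarith
        _ ≤ r₁ := by rw [hε_def]; have := min_le_left r₁ r₂; linarith
    · refine ⟨omega fn (m + k) u₂, ⟨u₂, hu₂, rfl⟩, hb₂ ?_⟩
      have heq : omega fn (m + k) u₂ = omegaSeg fn m k p₂ := by
        rw [omega_add fn m k]; simp [Function.comp, hu₂p]
      rw [mem_ball, heq]
      calc dist (omegaSeg fn m k p₂) y₂
          ≤ dist (omegaSeg fn m k p₂) (f^[k] p₂) + dist (f^[k] p₂) y₂ := dist_triangle _ _ _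
        _ < ε + ε := by
            have := key m k p₂
            have hzb : dist (f^[k] p₂) y₂ < ε := by rw [← hz₂] at hz₂b; exact mem_ball.1 hz₂b
            linarith
        _ ≤ r₂ := by rw [hε_def]; have := min_le_right r₁ r₂; linarith
  · -- F weakly mixing → f weakly mixing
    intro h U₁ U₂ V₁ V₂ hU₁o hU₂o hV₁o hV₂o hU₁ hU₂ hV₁ hV₂
    by_cases hX : ∀ p q : X, p = q
    · -- trivial (subsingleton) case
      obtain ⟨u, hu⟩ := hU₁
      obtain ⟨u', hu'⟩ := hU₂
      obtain ⟨v, hv⟩ := hV₁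
      obtain ⟨v', hv'⟩ := hV₂
      exact ⟨1, le_rfl, ⟨f^[1] u, ⟨u, hu, rfl⟩, (hX (f^[1] u) v) ▸ hv⟩,
        ⟨f^[1] u', ⟨u', hu', rfl⟩, (hX (f^[1] u') v') ▸ hv'⟩⟩
    push_neg at hX
    -- every ball contains a point outside any finite set
    have hinf : ∀ (y : X) (r : ℝ), 0 < r → ∀ E : Finset X, ∃ x ∈ ball y r, x ∉ E := by
      intro y r hr E
      by_contra hcon
      push_neg at hcon
      -- then {y} is open
      have hyopen : IsOpen ({y} : Set X) := by
        have hC : IsClosed ((E : Set X) \ {y}) := ((E.finite_toSet.diff)).isClosed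
        have hyC : y ∈ ((E : Set X) \ {y})ᶜ := by simp
        obtain ⟨ρ, hρ, hball⟩ := Metric.isOpen_iff.1 hC.isOpen_compl y hyC
        have : ball y (min ρ r) ⊆ {y} := by
          intro z hz
          have hz1 : z ∈ ball y ρ := ball_subset_ball (min_le_left _ _) hz
          have hz2 : z ∈ ball y r := ball_subset_ball (min_le_right _ _) hz
          have hzE : z ∈ E := hcon z hz2
          have := hball hz1
          simp only [mem_compl_iff, mem_diff, not_and, not_not] at this
          exact this hzE
        have hmem : y ∈ ball y (min ρ r) := mem_ball_self (lt_min hρ hr)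
        have : ({y} : Set X) = ball y (min ρ r) :=
          Subset.antisymm (by simpa using hmem) this
        rw [this]; exact isOpen_ball
      obtain ⟨p, q, hpq⟩ := hX
      have hq : ∃ z : X, z ≠ y := by
        rcases eq_or_ne p y with h | h
        · exact ⟨q, fun hqy => hpq (h.trans hqy.symm)⟩
        · exact ⟨p, h⟩
      obtain ⟨q, hq⟩ := hq
      obtain ⟨n, _, h1, h2⟩ := h {y} {y} {y} ({y}ᶜ) hyopen hyopen hyopen
        isClosed_singleton.isOpen_compl ⟨y, rfl⟩ ⟨y, rfl⟩ ⟨y, rfl⟩ ⟨q, hq⟩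
      obtain ⟨z, ⟨p, hp, hpz⟩, hz⟩ := h1
      obtain ⟨z', ⟨p', hp', hpz'⟩, hz'⟩ := h2
      simp only [mem_singleton_iff] at hp hp' hz
      rw [hp] at hpz; rw [hp'] at hpz'
      apply hz'
      rw [← hpz', hpz, hz]
      exact rfl
    obtain ⟨y₁, hy₁⟩ := hV₁
    obtain ⟨y₂, hy₂⟩ := hV₂
    obtain ⟨r₁, hr₁, hb₁⟩ := Metric.isOpen_iff.1 hV₁o y₁ hy₁
    obtain ⟨r₂, hr₂, hb₂⟩ := Metric.isOpen_iff.1 hV₂o y₂ hy₂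
    set ε₁ : ℝ := min r₁ r₂ / 4 with hε₁_def
    have hε₁ : 0 < ε₁ := by positivity
    obtain ⟨m, hm⟩ := htail ε₁ hε₁
    obtain ⟨u₁, hu₁⟩ := hU₁
    obtain ⟨u₂, hu₂⟩ := hU₂
    obtain ⟨a₁, ha₁⟩ := omega_surjective hsurj m u₁
    obtain ⟨a₂, ha₂⟩ := omega_surjective hsurj m u₂
    set E : Finset X := (Finset.range (m + 1)).image (fun n => omega fn n a₁) ∪
      (Finset.range (m + 1)).image (fun n => omega fn n a₂) with hE_def
    obtain ⟨x₁, hx₁b, hx₁E⟩ := hinf y₁ ε₁ hε₁ E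
    obtain ⟨x₂, hx₂b, hx₂E⟩ := hinf y₂ ε₁ hε₁ E
    -- choose ε > 0 with 2ε ≤ dist x_i e for all e ∈ E, and ε ≤ ε₁
    have hEne : E.Nonempty := by
      refine ⟨omega fn 0 a₁, ?_⟩
      rw [hE_def]
      exact Finset.mem_union_left _ (Finset.mem_image.2 ⟨0, Finset.mem_range.2 (Nat.succ_pos m), rfl⟩)
    set μ : ℝ := (E.image (fun e => min (dist x₁ e) (dist x₂ e))).min' (hEne.image _) with hμ_def
    have hμpos : 0 < μ := by
      rw [hμ_def]
      apply (Finset.lt_min'_iff _ _).2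
      intro b hb
      obtain ⟨e, heE, rfl⟩ := Finset.mem_image.1 hb
      apply lt_min
      · exact dist_pos.2 (fun hne => hx₁E (hne ▸ heE))
      · exact dist_pos.2 (fun hne => hx₂E (hne ▸ heE))
    have hμle : ∀ e ∈ E, μ ≤ dist x₁ e ∧ μ ≤ dist x₂ e := by
      intro e heE
      have h1 : μ ≤ min (dist x₁ e) (dist x₂ e) :=
        Finset.min'_le _ _ (Finset.mem_image.2 ⟨e, heE, rfl⟩)
      exact ⟨h1.trans (min_le_left _ _), h1.trans (min_le_right _ _)⟩
    set ε : ℝ := min ε₁ (μ / 3) with hε_def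
    have hε : 0 < ε := lt_min hε₁ (by positivity)
    have hεε₁ : ε ≤ ε₁ := min_le_left _ _
    have hεμ : 3 * ε ≤ μ := by
      have := min_le_right ε₁ (μ / 3); rw [hε_def]; linarith [min_le_right ε₁ (μ / 3)]
    -- the source sets
    set A₁ : Set X := omega fn m ⁻¹' U₁ ∩
      ⋂ n ∈ Finset.range (m + 1), omega fn n ⁻¹' (ball (omega fn n a₁) ε) with hA₁_def
    set A₂ : Set X := omega fn m ⁻¹' U₂ ∩
      ⋂ n ∈ Finset.range (m + 1), omega fn n ⁻¹' (ball (omega fn n a₂) ε) with hA₂_def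
    have hA₁o : IsOpen A₁ :=
      (hU₁o.preimage (omega_continuous hfn m)).inter
        (isOpen_biInter_finset fun n _ => isOpen_ball.preimage (omega_continuous hfn n))
    have hA₂o : IsOpen A₂ :=
      (hU₂o.preimage (omega_continuous hfn m)).inter
        (isOpen_biInter_finset fun n _ => isOpen_ball.preimage (omega_continuous hfn n))
    have hA₁ne : a₁ ∈ A₁ := by
      refine ⟨by simpa [ha₁] using hu₁, ?_⟩
      simp only [mem_iInter, mem_preimage]
      exact fun n _ => mem_ball_self hε
    have hA₂ne : a₂ ∈ A₂ := by
      refine ⟨by simpa [ha₂] using hu₂, ?_⟩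
      simp only [mem_iInter, mem_preimage]
      exact fun n _ => mem_ball_self hε
    obtain ⟨n, hn1, ⟨w₁, ⟨z₁, hz₁A, hz₁w⟩, hw₁b⟩, ⟨w₂, ⟨z₂, hz₂A, hz₂w⟩, hw₂b⟩⟩ :=
      h A₁ A₂ (ball x₁ ε) (ball x₂ ε) hA₁o hA₂o isOpen_ball isOpen_ball
        ⟨a₁, hA₁ne⟩ ⟨a₂, hA₂ne⟩ (nonempty_ball.2 hε) (nonempty_ball.2 hε)
    rw [← hz₁w] at hw₁b
    rw [← hz₂w] at hw₂b
    -- n must be larger than m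
    have hmn : m < n := by
      by_contra hc
      push_neg at hc
      have hnr : n ∈ Finset.range (m + 1) := Finset.mem_range.2 (Nat.lt_succ_of_le hc)
      have h1 : omega fn n z₁ ∈ ball (omega fn n a₁) ε := by
        have := hz₁A.2
        simp only [mem_iInter, mem_preimage] at this
        exact this n hnr
      have hEmem : omega fn n a₁ ∈ E := by
        rw [hE_def]
        exact Finset.mem_union_left _ (Finset.mem_image.2 ⟨n, hnr, rfl⟩)
      have hd : dist x₁ (omega fn n a₁) < 2 * ε := by
        calc dist x₁ (omega fn n a₁)
            ≤ dist x₁ (omega fn n z₁) + dist (omega fn n z₁) (omega fn n a₁) :=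
              dist_triangle _ _ _
          _ < ε + ε := add_lt_add (by rw [dist_comm]; exact mem_ball.1 hw₁b) (mem_ball.1 h1)
          _ = 2 * ε := by ring
      have := (hμle _ hEmem).1
      linarith
    obtain ⟨k, hk⟩ : ∃ k, n = m + k := ⟨n - m, (Nat.add_sub_cancel' hmn.le).symm⟩
    have hk1 : 1 ≤ k := by omega
    refine ⟨k, hk1, ?_, ?_⟩
    · refine ⟨f^[k] (omega fn m z₁), ⟨omega fn m z₁, hz₁A.1, rfl⟩, hb₁ ?_⟩
      have heq : omega fn n z₁ = omegaSeg fn m k (omega fn m z₁) := by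
        rw [hk, omega_add fn m k]; rfl
      rw [mem_ball]
      calc dist (f^[k] (omega fn m z₁)) y₁
          ≤ dist (f^[k] (omega fn m z₁)) (omegaSeg fn m k (omega fn m z₁))
            + dist (omega fn n z₁) x₁ + dist x₁ y₁ := by
            rw [heq]
            have := dist_triangle (f^[k] (omega fn m z₁)) (omegaSeg fn m k (omega fn m z₁)) y₁
            have := dist_triangle (omegaSeg fn m k (omega fn m z₁)) x₁ y₁
            linarith [dist_triangle (f^[k] (omega fn m z₁)) (omegaSeg fn m k (omega fn m z₁)) y₁,
              dist_triangle (omegaSeg fn m k (omega fn m z₁)) x₁ y₁]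
        _ < ε₁ + ε + ε₁ := by
            have h1 : dist (f^[k] (omega fn m z₁)) (omegaSeg fn m k (omega fn m z₁)) < ε₁ := by
              rw [dist_comm]; exact lt_of_le_of_lt (key m k _) hm
            have h2 : dist (omega fn n z₁) x₁ < ε := mem_ball.1 hw₁b
            have h3 : dist x₁ y₁ < ε₁ := mem_ball.1 hx₁b
            linarith
        _ ≤ r₁ := by
            have hmin : min r₁ r₂ ≤ r₁ := min_le_left _ _
            rw [hε₁_def] at *
            linarith [hεε₁]
    · refine ⟨f^[k] (omega fn m z₂), ⟨omega fn m z₂, hz₂A.1, rfl⟩, hb₂ ?_⟩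
      have heq : omega fn n z₂ = omegaSeg fn m k (omega fn m z₂) := by
        rw [hk, omega_add fn m k]; rfl
      rw [mem_ball]
      calc dist (f^[k] (omega fn m z₂)) y₂
          ≤ dist (f^[k] (omega fn m z₂)) (omegaSeg fn m k (omega fn m z₂))
            + dist (omega fn n z₂) x₂ + dist x₂ y₂ := by
            rw [heq]
            linarith [dist_triangle (f^[k] (omega fn m z₂)) (omegaSeg fn m k (omega fn m z₂)) y₂,
              dist_triangle (omegaSeg fn m k (omega fn m z₂)) x₂ y₂]
        _ < ε₁ + ε + ε₁ := by
            have h1 : dist (f^[k] (omega fn m z₂)) (omegaSeg fn m k (omega fn m z₂)) < ε₁ := by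
              rw [dist_comm]; exact lt_of_le_of_lt (key m k _) hm
            have h2 : dist (omega fn n z₂) x₂ < ε := mem_ball.1 hw₂b
            have h3 : dist x₂ y₂ < ε₁ := mem_ball.1 hx₂b
            linarith
        _ ≤ r₂ := by
            have hmin : min r₁ r₂ ≤ r₂ := min_le_right _ _
            rw [hε₁_def] at *
            linarith [hεε₁]
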